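/- For every real number μ with |μ| ≥ 1: maxT(μ,β) ≥ 1 for all β ∈ ℝ, and maxT(μ,−1) = 1; hence min_{β∈ℝ} maxT(μ,β) = 1. -/

import Mathlib

/-- The maximum of the moduli of the two complex roots (counted with multiplicity) of
`λ² − (1+β)·μ·λ + β = 0`; the roots are given by the quadratic formula
`((1+β)μ ± √((1+β)²μ² − 4β))/2` (complex square root via `cpow`). -/
noncomputable def maxT (μ β : ℝ) : ℝ :=
  max (Norm.norm (((((1 + β) * μ : ℝ) : ℂ) +
        ((((1 + β) ^ 2 * μ ^ 2 - 4 * β : ℝ) : ℂ)) ^ ((1 : ℂ) / 2)) / 2))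
      (Norm.norm (((((1 + β) * μ : ℝ) : ℂ) -
        ((((1 + β) ^ 2 * μ ^ 2 - 4 * β : ℝ) : ℂ)) ^ ((1 : ℂ) / 2)) / 2))

/-- The optimal coefficient `βN(μ) = (1 − √(1−μ²))/(1 + √(1−μ²))`. -/
noncomputable def βN (μ : ℝ) : ℝ :=
  (1 - Real.sqrt (1 - μ ^ 2)) / (1 + Real.sqrt (1 - μ ^ 2))

theorem stmt15 (μ : ℝ) (h : 1 ≤ |μ|) :
    (∀ β : ℝ, 1 ≤ maxT μ β) ∧ maxT μ (-1) = 1 := by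
  have hμ2 : 1 ≤ μ ^ 2 := by nlinarith [sq_abs μ, abs_nonneg μ]
  constructor
  · intro β
    unfold maxT
    set D : ℝ := (1 + β) ^ 2 * μ ^ 2 - 4 * β with hD
    set s : ℝ := (1 + β) * μ with hs
    set w : ℂ := ((D : ℝ) : ℂ) ^ ((1 : ℂ) / 2) with hwdef
    rw [norm_div, norm_div, Complex.norm_two]
    have hw2 : w ^ 2 = (D : ℂ) := by
      by_cases hD0 : (D : ℂ) = 0
      · rw [hwdef, hD0, Complex.zero_cpow (by norm_num : (1 : ℂ) / 2 ≠ 0)]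
        norm_num
      · rw [hwdef, sq, ← Complex.cpow_add _ _ hD0]
        norm_num
    have hsabs : 1 + β ≤ |s| := by
      rcases le_or_gt (1 + β) 0 with h1 | h1
      · exact h1.trans (abs_nonneg s)
      · rw [hs, abs_mul]
        calc 1 + β = (1 + β) * 1 := by ring
          _ ≤ |1 + β| * |μ| := by
              apply mul_le_mul (le_abs_self _) h (by norm_num) (abs_nonneg _)
    rcases le_or_gt 0 β with hβ | hβ
    · -- pure algebra via product and sum of roots
      by_contra hlt
      push_neg at hlt
      rw [max_lt_iff] at hlt
      obtain ⟨h1, h2⟩ := hlt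
      set a : ℝ := ‖((s : ℝ) : ℂ) + w‖ with ha
      set b : ℝ := ‖((s : ℝ) : ℂ) - w‖ with hb
      have ha2 : a < 2 := by linarith
      have hb2 : b < 2 := by linarith
      have hprod : a * b = 4 * β := by
        rw [ha, hb, ← norm_mul]
        have hDC : (D : ℂ) = (s : ℂ) ^ 2 - 4 * (β : ℂ) := by
          rw [hD, hs]; push_cast; ring
        have : (((s : ℝ) : ℂ) + w) * (((s : ℝ) : ℂ) - w) = ((4 * β : ℝ) : ℂ) := by
          push_cast
          linear_combination -hw2 - hDC
        rw [this, Complex.norm_real, Real.norm_eq_abs, abs_of_nonneg (by linarith)]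
      have hsum : 2 * |s| ≤ a + b := by
        have h2s : ((2 * s : ℝ) : ℂ) = (((s : ℝ) : ℂ) + w) + (((s : ℝ) : ℂ) - w) := by
          push_cast; ring
        calc 2 * |s| = ‖((2 * s : ℝ) : ℂ)‖ := by
              rw [Complex.norm_real, Real.norm_eq_abs, abs_mul 2 s, abs_two]
          _ ≤ a + b := by rw [h2s]; exact norm_add_le _ _
      nlinarith
    · -- β < 0 : the discriminant is nonnegative, roots are real
      have hD0 : (0 : ℝ) ≤ D := by
        rw [hD]; nlinarith [sq_nonneg ((1 + β) * μ)]
      have hw : w = ((Real.sqrt D : ℝ) : ℂ) := by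
        rw [hwdef, Real.sqrt_eq_rpow, Complex.ofReal_cpow hD0]
        norm_num
      have hsq : 1 - β ≤ Real.sqrt D := by
        have h1 : (1 - β) ^ 2 ≤ D := by rw [hD]; nlinarith [sq_nonneg (1 + β)]
        calc 1 - β = Real.sqrt ((1 - β) ^ 2) := by
              rw [Real.sqrt_sq (by linarith)]
          _ ≤ Real.sqrt D := Real.sqrt_le_sqrt h1
      have key : 2 ≤ |s| + Real.sqrt D := by linarith
      rcases le_or_gt 0 s with hs0 | hs0
      · apply le_max_of_le_left
        rw [hw, ← Complex.ofReal_add, Complex.norm_real, Real.norm_eq_abs,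
          abs_of_nonneg (by positivity)]
        rw [abs_of_nonneg hs0] at key
        linarith
      · apply le_max_of_le_right
        rw [hw, ← Complex.ofReal_sub, Complex.norm_real, Real.norm_eq_abs,
          abs_of_nonpos (by nlinarith [Real.sqrt_nonneg D])]
        rw [abs_of_neg hs0] at key
        linarith
  · -- maxT μ (−1) = 1
    have hsq4 : Real.sqrt 4 = 2 := by
      rw [show (4 : ℝ) = 2 ^ 2 by norm_num, Real.sqrt_sq (by norm_num : (0:ℝ) ≤ 2)]
    have h4 : (((4 : ℝ) : ℂ)) ^ ((1 : ℂ) / 2) = 2 := by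
      rw [show ((1 : ℂ) / 2) = (((1 / 2 : ℝ) : ℝ) : ℂ) by norm_num,
        ← Complex.ofReal_cpow (by norm_num : (0:ℝ) ≤ 4), ← Real.sqrt_eq_rpow, hsq4]
      norm_num
    push_cast at h4
    unfold maxT
    norm_num [h4, Complex.norm_two]
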